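/- Let G be a symmetric n×n integer matrix with det G ≠ 0, and set β(x,y) = xᵀGy and β(x) = xᵀGx/2. Let χ : ℤⁿ × ℤⁿ → ℂˣ be a homomorphism from the additive group ℤⁿ × ℤⁿ to the multiplicative group of nonzero complex numbers. Then χ satisfies χ(x,y) = χ(ax+cy, bx+dy) · e(ab·β(x) + cd·β(y)) for all x, y ∈ ℤⁿ and all matrices [[a,b],[c,d]] ∈ SL(2,ℤ) if and only if χ(x,y) = e(β(x+y)) = exp(πi·(x+y)ᵀG(x+y)) for all x, y ∈ ℤⁿ. -/

import Mathlib

open Matrix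

noncomputable def Echr (m : ℤ) : ℂ := Complex.exp ((Real.pi : ℂ) * Complex.I * (m : ℂ))

lemma Echr_def (m : ℤ) : Echr m = Complex.exp ((Real.pi : ℂ) * Complex.I * (m : ℂ)) := rfl

lemma Echr_add (m k : ℤ) : Echr (m + k) = Echr m * Echr k := by
  simp only [Echr, ← Complex.exp_add]
  push_cast; ring_nf

lemma Echr_even {m : ℤ} (h : 2 ∣ m) : Echr m = 1 := by
  obtain ⟨k, rfl⟩ := h
  have := Complex.exp_int_mul_two_pi_mul_I k
  rw [Echr_def, show ((Real.pi:ℂ) * Complex.I * (((2*k : ℤ)):ℂ)) = (k:ℂ) * (2*Real.pi*Complex.I) by push_cast; ring]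
  exact this

lemma Echr_ne_zero (m : ℤ) : Echr m ≠ 0 := Complex.exp_ne_zero _

lemma Echr_inv (m : ℤ) : (Echr m)⁻¹ = Echr m := by
  have h : Echr m * Echr m = 1 := by
    rw [← Echr_add]; exact Echr_even ⟨m, by ring⟩
  exact inv_eq_of_mul_eq_one_right h

lemma Echr_congr {m k : ℤ} (h : 2 ∣ (m - k)) : Echr m = Echr k := by
  have h1 : Echr m = Echr (k + (m - k)) := by ring_nf
  rw [h1, Echr_add, Echr_even h, mul_one]

lemma zmod2_key : ∀ a b c d qx qy bb : ZMod 2, a*d - b*c = 1 →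
    ((a+b)*(a+b)*qx + (c+d)*(c+d)*qy + 2*(a+b)*(c+d)*bb) + a*b*qx + c*d*qy - (qx + qy + 2*bb) = 0 := by
  decide

/-- For a nondegenerate symmetric integer matrix `G` with associated
bilinear form `β(x,y) = xᵀGy`, `β(x) = xᵀGx/2`, a homomorphism
`χ : ℤⁿ × ℤⁿ → ℂˣ` satisfies the `SL(2,ℤ)`-compatibility condition
`χ(x,y) = χ(ax+cy, bx+dy)·e(ab·β(x) + cd·β(y))` for all `x, y` and all
`[[a,b],[c,d]] ∈ SL(2,ℤ)` if and only if `χ(x,y) = e(β(x+y))`. -/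
theorem character_compatible_with_SL2_iff
    {n : ℕ} (G : Matrix (Fin n) (Fin n) ℤ) (hG : G.IsSymm) (hdet : G.det ≠ 0)
    (χ : (Fin n → ℤ) × (Fin n → ℤ) → ℂˣ)
    (hχ : ∀ v w : (Fin n → ℤ) × (Fin n → ℤ), χ (v + w) = χ v * χ w) :
    (∀ (x y : Fin n → ℤ) (a b c d : ℤ), a * d - b * c = 1 →
        (χ (x, y) : ℂ) =
          (χ (a • x + c • y, b • x + d • y) : ℂ) *
            Complex.exp ((Real.pi : ℂ) * Complex.I *
              (((a * b * (x ⬝ᵥ G.mulVec x) + c * d * (y ⬝ᵥ G.mulVec y)) : ℤ) : ℂ)))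
      ↔
    (∀ x y : Fin n → ℤ,
        (χ (x, y) : ℂ) =
          Complex.exp ((Real.pi : ℂ) * Complex.I *
            ((((x + y) ⬝ᵥ G.mulVec (x + y)) : ℤ) : ℂ))) := by
  have hsymm : ∀ x y : Fin n → ℤ, y ⬝ᵥ G.mulVec x = x ⬝ᵥ G.mulVec y := by
    intro x y
    rw [Matrix.dotProduct_mulVec, ← Matrix.mulVec_transpose, hG.eq, dotProduct_comm]
  have expand : ∀ (p q : ℤ) (x y : Fin n → ℤ),
      (p • x + q • y) ⬝ᵥ G.mulVec (p • x + q • y) =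
        p*p*(x ⬝ᵥ G.mulVec x) + q*q*(y ⬝ᵥ G.mulVec y) + 2*p*q*(x ⬝ᵥ G.mulVec y) := by
    intro p q x y
    simp only [Matrix.mulVec_add, Matrix.mulVec_smul, dotProduct_add, add_dotProduct,
      dotProduct_smul, smul_dotProduct, smul_eq_mul]
    rw [hsymm y x]; ring
  have expand11 : ∀ x y : Fin n → ℤ,
      (x + y) ⬝ᵥ G.mulVec (x + y) =
        (x ⬝ᵥ G.mulVec x) + (y ⬝ᵥ G.mulVec y) + 2*(x ⬝ᵥ G.mulVec y) := by
    intro x y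
    have := expand 1 1 x y
    simpa using this
  have h0 : χ 0 = 1 := by
    have h := hχ 0 0
    rw [add_zero] at h
    exact (left_eq_mul.mp h)
  constructor
  · intro h x y
    rw [← Echr_def]
    -- χ(0,x) = (Echr Qx)⁻¹
    have hT : ∀ z : Fin n → ℤ, (χ ((0 : Fin n → ℤ), z) : ℂ) = (Echr (z ⬝ᵥ G.mulVec z))⁻¹ := by
      intro z
      have h1 := h z 0 1 1 0 1 (by ring)
      simp only [one_smul, zero_smul, add_zero, smul_zero] at h1
      rw [← Echr_def] at h1
      have hz : (0 : Fin n → ℤ) ⬝ᵥ G.mulVec 0 = 0 := by simp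
      rw [hz] at h1
      have hxx : χ (z, z) = χ (z, 0) * χ ((0:Fin n → ℤ), z) := by
        have := hχ (z, 0) (0, z)
        simpa using this
      rw [hxx] at h1
      rw [show (1 * 1 * (z ⬝ᵥ G.mulVec z) + 0 * 1 * 0 : ℤ) = z ⬝ᵥ G.mulVec z by ring] at h1
      push_cast at h1
      have hne : (χ (z, (0:Fin n → ℤ)) : ℂ) ≠ 0 := Units.ne_zero _
      have key : (χ ((0:Fin n → ℤ), z) : ℂ) * Echr (z ⬝ᵥ G.mulVec z) = 1 :=
        mul_left_cancel₀ hne (by rw [← mul_assoc, ← h1, mul_one])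
      exact eq_inv_of_mul_eq_one_left key
    -- χ(x,0) = Echr Qx
    have hS : ∀ z : Fin n → ℤ, (χ (z, (0 : Fin n → ℤ))) = (χ ((0:Fin n → ℤ), z))⁻¹ := by
      intro z
      have h1 := h z 0 0 (-1) 1 0 (by ring)
      simp only [zero_smul, one_smul, neg_smul, smul_zero, add_zero, zero_add] at h1
      rw [← Echr_def] at h1
      have hz : (0 : Fin n → ℤ) ⬝ᵥ G.mulVec 0 = 0 := by simp
      rw [hz] at h1
      rw [show (0 * -1 * (z ⬝ᵥ G.mulVec z) + 1 * 0 * 0 : ℤ) = 0 by ring] at h1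
      rw [show Echr 0 = 1 from Echr_even ⟨0, by ring⟩, mul_one] at h1
      have hinv : χ ((0:Fin n → ℤ), -z) = (χ ((0:Fin n → ℤ), z))⁻¹ := by
        apply eq_inv_of_mul_eq_one_right
        rw [← hχ]
        simpa using (show χ ((0:Fin n → ℤ), (0:Fin n → ℤ)) = 1 from h0)
      have : χ (z, (0:Fin n → ℤ)) = χ ((0:Fin n → ℤ), -z) := Units.ext h1
      rw [this, hinv]
    have hx0 : (χ (x, (0:Fin n → ℤ)) : ℂ) = Echr (x ⬝ᵥ G.mulVec x) := by
      rw [hS x]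
      push_cast
      rw [hT x, inv_inv]
    have hsplit : (χ (x, y) : ℂ) = (χ (x, (0:Fin n → ℤ)) : ℂ) * (χ ((0:Fin n → ℤ), y) : ℂ) := by
      have := hχ (x, 0) (0, y)
      rw [show ((x, (0:Fin n → ℤ)) + ((0:Fin n → ℤ), y)) = (x, y) by simp] at this
      push_cast [this]; ring
    rw [hsplit, hx0, hT y, Echr_inv, ← Echr_add]
    apply (Echr_congr _).symm
    rw [expand11 x y]
    exact ⟨x ⬝ᵥ G.mulVec y, by ring⟩
  · intro h x y a b c d hadbc
    rw [h x y, h (a • x + c • y) (b • x + d • y), ← Echr_def, ← Echr_def, ← Echr_def, ← Echr_add]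
    apply Echr_congr
    have hcomb : (a • x + c • y) + (b • x + d • y) = (a+b) • x + (c+d) • y := by
      module
    rw [hcomb, expand (a+b) (c+d) x y, expand11 x y]
    rw [show (2:ℤ) = ((2:ℕ):ℤ) by norm_num, ← ZMod.intCast_zmod_eq_zero_iff_dvd]
    push_cast
    have h2 : (a : ZMod 2) * d - b * c = 1 := by exact_mod_cast congrArg (Int.cast : ℤ → ZMod 2) hadbc
    have := zmod2_key a b c d ((x ⬝ᵥ G.mulVec x : ℤ) : ZMod 2) ((y ⬝ᵥ G.mulVec y : ℤ) : ZMod 2)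
      ((x ⬝ᵥ G.mulVec y : ℤ) : ZMod 2) h2
    push_cast at this
    linear_combination -this
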